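/- arXiv:1705.02831 — 4 statements merged into one kernel-verified Lean document; each statement's English description precedes it below -/
import Mathlib

section
/- In a strongly distributive skew lattice, Green's relation D is a congruence with respect to both ∧ and ∨: if x D x' and y D y' then (x ∧ y) D (x' ∧ y') and (x ∨ y) D (x' ∨ y'). -/
structure SkewLattice (L : Type*) where
  meet : L → L → L
  join : L → L → L
  meet_idem : ∀ x, meet x x = x
  join_idem : ∀ x, join x x = x
  meet_assoc : ∀ x y z, meet (meet x y) z = meet x (meet y z)
  join_assoc : ∀ x y z, join (join x y) z = join x (join y z)
  absorb1 : ∀ x y, meet x (join x y) = x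
  absorb2 : ∀ x y, join x (meet x y) = x
  absorb3 : ∀ x y, join (meet x y) y = y
  absorb4 : ∀ x y, meet (join x y) y = y

def StronglyDistributive {L : Type*} (S : SkewLattice L) : Prop :=
  (∀ x y z, S.meet (S.join x y) z = S.join (S.meet x z) (S.meet y z)) ∧
  (∀ x y z, S.meet x (S.join y z) = S.join (S.meet x y) (S.meet x z))

/-- Green's relation D. -/
def GreensD {L : Type*} (S : SkewLattice L) (x y : L) : Prop :=
  S.meet (S.meet x y) x = x ∧ S.meet (S.meet y x) y = y

section Aux

variable {L : Type*} (S : SkewLattice L)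

local infixl:70 " ⬝ " => S.meet
local infixl:65 " ⊹ " => S.join

/-- The sandwich normality identity: a∧b∧c∧a = a∧c∧b∧a. -/
lemma sl_sand (hSD : StronglyDistributive S) (a b c : L) :
    a ⬝ b ⬝ c ⬝ a = a ⬝ c ⬝ b ⬝ a := by
  have hdup : a ⬝ (a ⊹ c) ⬝ b ⬝ c ⬝ b ⬝ c ⬝ a = a ⬝ (a ⊹ c) ⬝ b ⬝ c ⬝ a := by
    rw [S.meet_assoc (a ⬝ (a ⊹ c) ⬝ b ⬝ c) b c, S.meet_assoc (a ⬝ (a ⊹ c)) b c,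
        S.meet_assoc (a ⬝ (a ⊹ c)) (b ⬝ c) (b ⬝ c), S.meet_idem (b ⬝ c)]
  calc a ⬝ b ⬝ c ⬝ a
      = a ⬝ (a ⊹ c) ⬝ b ⬝ c ⬝ a := by rw [S.absorb1]
    _ = a ⬝ (a ⊹ c) ⬝ b ⬝ c ⬝ b ⬝ c ⬝ a := hdup.symm
    _ = a ⬝ ((a ⬝ b) ⊹ (c ⬝ b)) ⬝ c ⬝ b ⬝ c ⬝ a := by
        rw [S.meet_assoc a (a ⊹ c) b, hSD.1 a c b]
    _ = a ⬝ c ⬝ b ⬝ c ⬝ a := by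
        rw [S.meet_assoc (a ⬝ ((a ⬝ b) ⊹ (c ⬝ b))) c b,
            S.meet_assoc a ((a ⬝ b) ⊹ (c ⬝ b)) (c ⬝ b),
            S.absorb4 (a ⬝ b) (c ⬝ b), ← S.meet_assoc a c b]
    _ = a ⬝ c ⬝ b ⬝ c ⬝ ((b ⬝ a) ⊹ a) := by rw [S.absorb3 b a]
    _ = a ⬝ c ⬝ b ⬝ ((c ⬝ (b ⬝ a)) ⊹ (c ⬝ a)) := by
        rw [S.meet_assoc (a ⬝ c ⬝ b) c ((b ⬝ a) ⊹ a), hSD.2 c (b ⬝ a) a]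
    _ = a ⬝ c ⬝ b ⬝ (((c ⬝ b) ⊹ c) ⬝ a) := by
        rw [← S.meet_assoc c b a, ← hSD.1 (c ⬝ b) c a]
    _ = a ⬝ c ⬝ b ⬝ a := by
        rw [S.meet_assoc a c b, ← S.meet_assoc (a ⬝ (c ⬝ b)) ((c ⬝ b) ⊹ c) a,
            S.meet_assoc a (c ⬝ b) ((c ⬝ b) ⊹ c), S.absorb1 (c ⬝ b) c]

/-- Full normality: a∧b∧c∧d = a∧c∧b∧d. -/
lemma sl_normal (hSD : StronglyDistributive S) (a b c d : L) :
    a ⬝ b ⬝ c ⬝ d = a ⬝ c ⬝ b ⬝ d := by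
  calc a ⬝ b ⬝ c ⬝ d
      = (a ⬝ b ⬝ c ⬝ d) ⬝ (a ⬝ b ⬝ c ⬝ d) := (S.meet_idem _).symm
    _ = (a ⬝ b ⬝ c) ⬝ (d ⬝ (a ⬝ b) ⬝ c ⬝ d) := by simp only [S.meet_assoc]
    _ = (a ⬝ b ⬝ c) ⬝ (d ⬝ c ⬝ (a ⬝ b) ⬝ d) := by rw [sl_sand S hSD d (a ⬝ b) c]
    _ = (a ⬝ (b ⬝ (c ⬝ d)) ⬝ c ⬝ a) ⬝ (b ⬝ d) := by simp only [S.meet_assoc]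
    _ = (a ⬝ c ⬝ (b ⬝ (c ⬝ d)) ⬝ a) ⬝ (b ⬝ d) := by
        rw [sl_sand S hSD a (b ⬝ (c ⬝ d)) c]
    _ = (a ⬝ c) ⬝ (b ⬝ c ⬝ (d ⬝ a) ⬝ b ⬝ d) := by simp only [S.meet_assoc]
    _ = (a ⬝ c) ⬝ (b ⬝ (d ⬝ a) ⬝ c ⬝ b ⬝ d) := by rw [sl_sand S hSD b c (d ⬝ a)]
    _ = (a ⬝ c ⬝ (b ⬝ d)) ⬝ (a ⬝ c ⬝ (b ⬝ d)) := by simp only [S.meet_assoc]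
    _ = a ⬝ c ⬝ (b ⬝ d) := S.meet_idem _
    _ = a ⬝ c ⬝ b ⬝ d := by rw [← S.meet_assoc (a ⬝ c) b d]

/-- D is a congruence for the meet. -/
lemma sl_meet_cong (hSD : StronglyDistributive S) (x x' y y' : L)
    (h1 : x ⬝ x' ⬝ x = x) (h2 : y ⬝ y' ⬝ y = y) :
    (x ⬝ y) ⬝ (x' ⬝ y') ⬝ (x ⬝ y) = x ⬝ y := by
  calc (x ⬝ y) ⬝ (x' ⬝ y') ⬝ (x ⬝ y)
      = x ⬝ y ⬝ x' ⬝ (y' ⬝ (x ⬝ y)) := by simp only [S.meet_assoc]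
    _ = x ⬝ x' ⬝ y ⬝ (y' ⬝ (x ⬝ y)) := by
        rw [sl_normal S hSD x y x' (y' ⬝ (x ⬝ y))]
    _ = (x ⬝ x') ⬝ (y ⬝ y') ⬝ x ⬝ y := by simp only [S.meet_assoc]
    _ = (x ⬝ x') ⬝ x ⬝ (y ⬝ y') ⬝ y := by
        rw [sl_normal S hSD (x ⬝ x') (y ⬝ y') x y]
    _ = x ⬝ y := by rw [h1, S.meet_assoc x (y ⬝ y') y, h2]

/-- Transfer of the preorder along D (left version). -/
lemma sl_P1 (hSD : StronglyDistributive S) (x x' w : L)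
    (h : x ⬝ x' ⬝ x = x) (hw : x' ⬝ w = x') : x ⬝ w ⬝ x = x := by
  calc x ⬝ w ⬝ x = (x ⬝ x' ⬝ x) ⬝ w ⬝ (x ⬝ x' ⬝ x) := by rw [h]
    _ = (x ⬝ x') ⬝ x ⬝ w ⬝ (x ⬝ (x' ⬝ x)) := by simp only [S.meet_assoc]
    _ = (x ⬝ x') ⬝ w ⬝ x ⬝ (x ⬝ (x' ⬝ x)) := by
        rw [sl_normal S hSD (x ⬝ x') x w (x ⬝ (x' ⬝ x))]
    _ = (x ⬝ (x' ⬝ w)) ⬝ (x ⬝ x) ⬝ (x' ⬝ x) := by simp only [S.meet_assoc]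
    _ = (x ⬝ x') ⬝ (x ⬝ x) ⬝ (x' ⬝ x) := by rw [hw]
    _ = x ⬝ x' ⬝ x ⬝ (x' ⬝ x) := by rw [S.meet_idem x]
    _ = x ⬝ (x' ⬝ x) := by rw [h]
    _ = x := by rw [← S.meet_assoc x x' x, h]

/-- Transfer of the preorder along D (right version). -/
lemma sl_P2 (hSD : StronglyDistributive S) (y y' w : L)
    (h : y ⬝ y' ⬝ y = y) (hw : w ⬝ y' = y') : y ⬝ w ⬝ y = y := by
  calc y ⬝ w ⬝ y = (y ⬝ y' ⬝ y) ⬝ w ⬝ (y ⬝ y' ⬝ y) := by rw [h]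
    _ = (y ⬝ (y' ⬝ y)) ⬝ w ⬝ y ⬝ (y' ⬝ y) := by simp only [S.meet_assoc]
    _ = (y ⬝ (y' ⬝ y)) ⬝ y ⬝ w ⬝ (y' ⬝ y) := by
        rw [sl_normal S hSD (y ⬝ (y' ⬝ y)) w y (y' ⬝ y)]
    _ = (y ⬝ (y' ⬝ y)) ⬝ (y ⬝ (w ⬝ y')) ⬝ y := by simp only [S.meet_assoc]
    _ = (y ⬝ (y' ⬝ y)) ⬝ (y ⬝ y') ⬝ y := by rw [hw]
    _ = (y ⬝ y') ⬝ (y ⬝ y) ⬝ (y' ⬝ y) := by simp only [S.meet_assoc]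
    _ = y ⬝ y' ⬝ y ⬝ (y' ⬝ y) := by rw [S.meet_idem y]
    _ = y ⬝ (y' ⬝ y) := by rw [h]
    _ = y := by rw [← S.meet_assoc y y' y, h]

/-- If a and b lie below z in the natural preorder, so does a∨b. -/
lemma sl_upper (hSD : StronglyDistributive S) (a b z : L)
    (ha : a ⬝ z ⬝ a = a) (hb : b ⬝ z ⬝ b = b) :
    (a ⊹ b) ⬝ z ⬝ (a ⊹ b) = a ⊹ b := by
  have h1 : (a ⬝ z) ⬝ (a ⊹ b) = a := by
    rw [hSD.2 (a ⬝ z) a b, ha, S.meet_assoc a z b, S.absorb2]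
  have h2 : b ⬝ z ⬝ a = b ⬝ a := by
    calc b ⬝ z ⬝ a = b ⬝ z ⬝ (a ⬝ z ⬝ a) := by rw [ha]
      _ = b ⬝ z ⬝ a ⬝ (z ⬝ a) := by simp only [S.meet_assoc]
      _ = b ⬝ a ⬝ z ⬝ (z ⬝ a) := by rw [sl_normal S hSD b z a (z ⬝ a)]
      _ = b ⬝ (a ⬝ (z ⬝ (z ⬝ a))) := by simp only [S.meet_assoc]
      _ = b ⬝ (a ⬝ (z ⬝ a)) := by rw [← S.meet_assoc z z a, S.meet_idem z]
      _ = b ⬝ a := by rw [← S.meet_assoc a z a, ha]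
  have h3 : (b ⬝ z) ⬝ (a ⊹ b) = (b ⬝ a) ⊹ b := by
    rw [hSD.2 (b ⬝ z) a b, hb, h2]
  calc (a ⊹ b) ⬝ z ⬝ (a ⊹ b)
      = ((a ⬝ z) ⊹ (b ⬝ z)) ⬝ (a ⊹ b) := by rw [hSD.1 a b z]
    _ = ((a ⬝ z) ⬝ (a ⊹ b)) ⊹ ((b ⬝ z) ⬝ (a ⊹ b)) := by
        rw [hSD.1 (a ⬝ z) (b ⬝ z) (a ⊹ b)]
    _ = a ⊹ ((b ⬝ a) ⊹ b) := by rw [h1, h3]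
    _ = (a ⊹ (b ⬝ a)) ⊹ b := (S.join_assoc a (b ⬝ a) b).symm
    _ = ((a ⬝ a) ⊹ (b ⬝ a)) ⊹ b := by rw [S.meet_idem a]
    _ = ((a ⊹ b) ⬝ a) ⊹ b := by rw [hSD.1 a b a]
    _ = a ⊹ b := by
        conv_rhs => rw [← S.meet_idem (a ⊹ b)]
        rw [hSD.2 (a ⊹ b) a b, S.absorb4 a b]

end Aux

theorem greensD_congruence {L : Type*} (S : SkewLattice L)
    (hSD : StronglyDistributive S) (x x' y y' : L)
    (hx : GreensD S x x') (hy : GreensD S y y') :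
    GreensD S (S.meet x y) (S.meet x' y') ∧ GreensD S (S.join x y) (S.join x' y') := by
  constructor
  · exact ⟨sl_meet_cong S hSD x x' y y' hx.1 hy.1,
      sl_meet_cong S hSD x' x y' y hx.2 hy.2⟩
  · exact ⟨sl_upper S hSD x y (S.join x' y')
        (sl_P1 S hSD x x' (S.join x' y') hx.1 (S.absorb1 x' y'))
        (sl_P2 S hSD y y' (S.join x' y') hy.1 (S.absorb4 x' y')),
      sl_upper S hSD x' y' (S.join x y)
        (sl_P1 S hSD x' x (S.join x y) hx.2 (S.absorb1 x y))
        (sl_P2 S hSD y' y (S.join x y) hy.2 (S.absorb4 x y))⟩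
end

section
/- If a strongly distributive skew lattice S has a maximal element 1 with respect to the natural partial order (i.e., x ≤ 1 for all x), then S is commutative: x ∧ y = y ∧ x for all x, y. -/
theorem max_implies_commutative {L : Type*} (S : SkewLattice L)
    (hSD : StronglyDistributive S) (one : L)
    (hmax : ∀ x, S.meet x one = x ∧ S.meet one x = x) :
    ∀ x y, S.meet x y = S.meet y x := by
  obtain ⟨ld, rd⟩ := hSD
  -- joins with the top are the top
  have h1 : ∀ w, S.join w one = one := by
    intro w
    have := S.absorb3 w one
    rwa [(hmax w).1] at this
  have h2 : ∀ w, S.join one w = one := by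
    intro w
    have := S.absorb2 one w
    rwa [(hmax w).2] at this
  -- extra absorption laws forced by the top
  have N1 : ∀ z w, S.join (S.meet z w) z = z := by
    intro z w
    have h := rd z w one
    rw [h1, (hmax z).1] at h
    exact h.symm
  have N2 : ∀ z w, S.join z (S.meet w z) = z := by
    intro z w
    have h := ld one w z
    rw [h2, (hmax z).2] at h
    exact h.symm
  intro x y
  -- abbreviations (as plain definitions)
  have hbx : S.meet (S.meet y x) x = S.meet y x := by
    rw [S.meet_assoc, S.meet_idem]
  have hay : S.meet (S.meet x y) y = S.meet x y := by
    rw [S.meet_assoc, S.meet_idem]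
  -- p = a ∧ x = x ∧ b ; q = b ∧ y = y ∧ a
  have hp' : S.meet (S.meet x y) x = S.meet x (S.meet y x) := S.meet_assoc x y x
  have hq' : S.meet (S.meet y x) y = S.meet y (S.meet x y) := S.meet_assoc y x y
  -- band computations
  have hpa : S.meet (S.meet (S.meet x y) x) (S.meet x y) = S.meet x y := by
    rw [S.meet_assoc (S.meet x y) x (S.meet x y), ← S.meet_assoc x x y,
      S.meet_idem x, S.meet_idem]
  have hpb : S.meet (S.meet (S.meet x y) x) (S.meet y x) = S.meet (S.meet x y) x := by
    rw [S.meet_assoc (S.meet x y) x (S.meet y x), ← S.meet_assoc x y x,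
      ← S.meet_assoc (S.meet x y) (S.meet x y) x, S.meet_idem]
  have hqa : S.meet (S.meet (S.meet y x) y) (S.meet x y) = S.meet (S.meet y x) y := by
    rw [S.meet_assoc (S.meet y x) y (S.meet x y), ← S.meet_assoc y x y,
      ← S.meet_assoc (S.meet y x) (S.meet y x) y, S.meet_idem]
  have hqb : S.meet (S.meet (S.meet y x) y) (S.meet y x) = S.meet y x := by
    rw [S.meet_assoc (S.meet y x) y (S.meet y x), ← S.meet_assoc y y x,
      S.meet_idem y, S.meet_idem]
  have hba : S.meet (S.meet y x) (S.meet x y) = S.meet (S.meet y x) y := by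
    rw [S.meet_assoc y x (S.meet x y), ← S.meet_assoc x x y, S.meet_idem x,
      ← S.meet_assoc y x y]
  have hab : S.meet (S.meet x y) (S.meet y x) = S.meet (S.meet x y) x := by
    rw [S.meet_assoc x y (S.meet y x), ← S.meet_assoc y y x, S.meet_idem y,
      ← S.meet_assoc x y x]
  -- join absorption facts
  have jap : S.join (S.meet x y) (S.meet (S.meet x y) x) = S.meet x y :=
    S.absorb2 (S.meet x y) x
  have jpa : S.join (S.meet (S.meet x y) x) (S.meet x y) = S.meet x y :=
    N1 (S.meet x y) x
  have jbq : S.join (S.meet y x) (S.meet (S.meet y x) y) = S.meet y x :=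
    S.absorb2 (S.meet y x) y
  have jqb : S.join (S.meet (S.meet y x) y) (S.meet y x) = S.meet y x :=
    N1 (S.meet y x) y
  have jpb : S.join (S.meet (S.meet x y) x) (S.meet y x) = S.meet y x := by
    rw [hp']; exact S.absorb3 x (S.meet y x)
  have jaq : S.join (S.meet x y) (S.meet (S.meet y x) y) = S.meet x y := by
    rw [hq']; exact N2 (S.meet x y) y
  -- Step A : a ∨ b = b ∨ a
  have hcv : S.join (S.meet x y) (S.meet y x) = S.join (S.meet y x) (S.meet x y) := by
    have w1 : S.meet (S.join (S.meet x y) (S.meet y x)) (S.join x y)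
        = S.join (S.meet x y) (S.meet y x) := by
      rw [ld (S.meet x y) (S.meet y x) (S.join x y), rd (S.meet x y) x y,
        rd (S.meet y x) x y, hbx, hay, jpa, jbq]
    have w2 : S.meet (S.join (S.meet x y) (S.meet y x)) (S.join x y)
        = S.join (S.meet y x) (S.meet x y) := by
      rw [rd (S.join (S.meet x y) (S.meet y x)) x y,
        ld (S.meet x y) (S.meet y x) x, ld (S.meet x y) (S.meet y x) y,
        hbx, hay, jpb, jaq]
    rw [← w1, w2]
  -- Step B : p = a
  have hpeq : S.meet (S.meet x y) x = S.meet x y := by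
    have h := N1 (S.meet (S.meet x y) x) (S.join (S.meet x y) (S.meet y x))
    rw [rd (S.meet (S.meet x y) x) (S.meet x y) (S.meet y x), hpa, hpb, jap] at h
    rw [← h, jap]
  -- Step C : q = b
  have hqeq : S.meet (S.meet y x) y = S.meet y x := by
    have h := N1 (S.meet (S.meet y x) y) (S.join (S.meet x y) (S.meet y x))
    rw [rd (S.meet (S.meet y x) y) (S.meet x y) (S.meet y x), hqa, hqb, jqb] at h
    rw [← h, jbq]
  -- Step D : a ∨ b = a and a ∨ b = b
  have d1 : S.meet (S.join (S.meet x y) (S.meet y x)) (S.meet x y) = S.meet x y := by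
    rw [hcv]; exact S.absorb4 (S.meet y x) (S.meet x y)
  have d2 : S.meet (S.join (S.meet x y) (S.meet y x)) (S.meet x y)
      = S.join (S.meet x y) (S.meet y x) := by
    rw [ld (S.meet x y) (S.meet y x) (S.meet x y), S.meet_idem, hba, hqeq]
  have d3 : S.meet (S.join (S.meet x y) (S.meet y x)) (S.meet y x) = S.meet y x :=
    S.absorb4 (S.meet x y) (S.meet y x)
  have d4 : S.meet (S.join (S.meet x y) (S.meet y x)) (S.meet y x)
      = S.join (S.meet x y) (S.meet y x) := by
    rw [hcv, ld (S.meet y x) (S.meet x y) (S.meet y x), S.meet_idem, hab, hpeq, ← hcv]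
  rw [← d1, d2, ← d4, d3]
end

section
/- Two elements x, y of a product skew lattice ∏_{i∈I} P̂ (where P̂ = P ∪ {0} with the flat skew lattice structure) are D-equivalent if and only if for every index i, x_i = 0 ⟺ y_i = 0. -/
/-- The meet on P̂ = P ∪ {0} (with `none` playing the role of 0): x ∧ y = x for x, y ∈ P,
and 0 is absorbing. -/
def pMeet {P : Type*} : Option P → Option P → Option P
  | some a, some _ => some a
  | _, _ => none

/-- The join on P̂ = P ∪ {0}: x ∨ y = y for x, y ∈ P, and 0 is neutral. -/
def pJoin {P : Type*} : Option P → Option P → Option P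
  | some _, some b => some b
  | none, y => y
  | x, none => x

/-- Green's relation D on the product skew lattice ∏_{i∈I} P̂ with componentwise
operations. -/
def prodD {I P : Type*} (x y : I → Option P) : Prop :=
  (fun i => pMeet (pMeet (x i) (y i)) (x i)) = x ∧
  (fun i => pMeet (pMeet (y i) (x i)) (y i)) = y

theorem prod_phat_D_iff {I P : Type*} (x y : I → Option P) :
    prodD x y ↔ ∀ i, x i = none ↔ y i = none := by
  constructor
  · rintro ⟨h1, h2⟩ i
    have e1 := congrFun h1 i
    have e2 := congrFun h2 i
    constructor
    · intro hx
      cases hy : y i with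
      | none => rfl
      | some b =>
        rw [hx, hy] at e2
        simp [pMeet] at e2
    · intro hy
      cases hx : x i with
      | none => rfl
      | some a =>
        rw [hx, hy] at e1
        simp [pMeet] at e1
  · intro h
    constructor <;> funext i <;>
      rcases hx : x i with _ | a <;> rcases hy : y i with _ | b <;>
        first
          | rfl
          | (exfalso; have := h i; simp [hx, hy] at this)
end

section
/- Let C be the two-object category with objects V, E and morphisms s, t : V → E (so presheaves on C are directed graphs). There are exactly 4 Grothendieck topologies on C. -/
open CategoryTheory CategoryTheory.Limits

namespace FourTop

open WalkingParallelPair WalkingParallelPairHom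

/-- The sieve on `one` generated by `left` and `right`. -/
def slr : Sieve WalkingParallelPair.one where
  arrows Y _ := Y = WalkingParallelPair.zero
  downward_closed := by
    rintro Y Z f rfl g
    change WalkingParallelPairHom _ _ at g
    cases g
    rfl

@[simp] lemma slr_zero (f : WalkingParallelPair.zero ⟶ WalkingParallelPair.one) :
    slr f := rfl

lemma slr_ne_top : slr ≠ ⊤ := by
  intro h
  have : slr (𝟙 WalkingParallelPair.one) := by rw [h]; trivial
  exact WalkingParallelPair.noConfusion this

/-- Every sieve on `zero` is `⊥` or `⊤`. -/
lemma sieve_zero (S : Sieve WalkingParallelPair.zero) : S = ⊥ ∨ S = ⊤ := by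
  by_cases h : S (𝟙 WalkingParallelPair.zero)
  · exact Or.inr (Sieve.id_mem_iff_eq_top.mp h)
  · refine Or.inl ?_
    ext Y f
    change WalkingParallelPairHom _ _ at f
    cases f
    exact ⟨fun hx => (h hx).elim, fun hx => hx.elim⟩

lemma bot_ne_top (X : WalkingParallelPair) : (⊥ : Sieve X) ≠ ⊤ := by
  intro h
  have : (⊥ : Sieve X) (𝟙 X) := by rw [h]; trivial
  exact this

/-- The Grothendieck topology determined by two propositions. -/
def Jab (a b : Prop) : GrothendieckTopology WalkingParallelPair where
  sieves X := match X with
    | .zero => {S | S = ⊤ ∨ a}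
    | .one => {S | S = ⊤ ∨ (b ∧ S left ∧ S right) ∨ (a ∧ b)}
  top_mem' X := by cases X <;> exact Or.inl rfl
  pullback_stable' := by
    intro X Y S f hS
    change WalkingParallelPairHom _ _ at f
    cases f with
    | id =>
        simpa [show (WalkingParallelPairHom.id X : X ⟶ X) = 𝟙 X from rfl,
          Sieve.pullback_id] using hS
    | left =>
        rcases hS with rfl | ⟨hb, hl, _⟩ | ⟨ha, _⟩
        · exact Or.inl Sieve.pullback_top
        · refine Or.inl (Sieve.id_mem_iff_eq_top.mp ?_)
          simpa using hl
        · exact Or.inr ha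
    | right =>
        rcases hS with rfl | ⟨hb, _, hr⟩ | ⟨ha, _⟩
        · exact Or.inl Sieve.pullback_top
        · refine Or.inl (Sieve.id_mem_iff_eq_top.mp ?_)
          simpa using hr
        · exact Or.inr ha
  transitive' := by
    intro X S hS R h
    cases X with
    | zero =>
        rcases hS with rfl | ha
        · simpa [Sieve.pullback_id] using h (f := 𝟙 _) trivial
        · exact Or.inr ha
    | one =>
        rcases hS with rfl | ⟨hb, hl, hr⟩ | ⟨ha, hb⟩
        · simpa [Sieve.pullback_id] using h (f := 𝟙 _) trivial
        · rcases h (f := left) hl with hL | haL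
          · rcases h (f := right) hr with hR | haR
            · refine Or.inr (Or.inl ⟨hb, ?_, ?_⟩)
              · have : (R.pullback left) (𝟙 _) := by rw [hL]; trivial
                simpa using this
              · have : (R.pullback right) (𝟙 _) := by rw [hR]; trivial
                simpa using this
            · exact Or.inr (Or.inr ⟨haR, hb⟩)
          · exact Or.inr (Or.inr ⟨haL, hb⟩)
        · exact Or.inr (Or.inr ⟨ha, hb⟩)


lemma pullback_bot {X Y : WalkingParallelPair} (f : Y ⟶ X) :
    (⊥ : Sieve X).pullback f = ⊥ := by
  ext Z g
  exact Iff.rfl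

variable (J : GrothendieckTopology WalkingParallelPair)

/-- The two invariants of a topology. -/
def A : Prop := ⊥ ∈ J WalkingParallelPair.zero
def B : Prop := slr ∈ J WalkingParallelPair.one

lemma bot_one_iff : ⊥ ∈ J WalkingParallelPair.one ↔ A J ∧ B J := by
  constructor
  · intro h
    refine ⟨?_, J.superset_covering bot_le h⟩
    have := J.pullback_stable left h
    rwa [pullback_bot] at this
  · rintro ⟨ha, hb⟩
    refine J.transitive hb ⊥ ?_
    rintro Y f hf
    have hY : Y = WalkingParallelPair.zero := hf
    subst hY
    rw [pullback_bot]
    exact ha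

lemma mem_zero_iff (S : Sieve WalkingParallelPair.zero) :
    S ∈ J WalkingParallelPair.zero ↔ (S = ⊤ ∨ A J) := by
  rcases sieve_zero S with rfl | rfl
  · simp [bot_ne_top, A]
  · simp

lemma le_slr {S : Sieve WalkingParallelPair.one} (h : ¬ S (𝟙 _)) : S ≤ slr := by
  rintro Y f hf
  change WalkingParallelPairHom _ _ at f
  cases f with
  | id => exact (h hf).elim
  | left => rfl
  | right => rfl

lemma eq_slr {S : Sieve WalkingParallelPair.one} (h : ¬ S (𝟙 _))
    (hl : S left) (hr : S right) : S = slr := by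
  refine le_antisymm (le_slr h) ?_
  rintro Y f hY
  have hY : Y = WalkingParallelPair.zero := hY
  subst hY
  change WalkingParallelPairHom _ _ at f
  cases f with
  | left => exact hl
  | right => exact hr

lemma pullback_eq_bot {S : Sieve WalkingParallelPair.one}
    {f : WalkingParallelPair.zero ⟶ WalkingParallelPair.one} (h : ¬ S f) :
    S.pullback f = ⊥ := by
  rcases sieve_zero (S.pullback f) with h' | h'
  · exact h'
  · exfalso
    have : (S.pullback f) (𝟙 _) := by rw [h']; trivial
    rw [Sieve.pullback_apply, Category.id_comp] at this
    exact h this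

lemma mem_one_iff (S : Sieve WalkingParallelPair.one) :
    S ∈ J WalkingParallelPair.one ↔
      (S = ⊤ ∨ (B J ∧ S left ∧ S right) ∨ (A J ∧ B J)) := by
  by_cases hid : S (𝟙 _)
  · rw [Sieve.id_mem_iff_eq_top] at hid
    subst hid
    simp
  · constructor
    · intro h
      by_cases hl : S left
      · by_cases hr : S right
        · rw [eq_slr hid hl hr] at h
          exact Or.inr (Or.inl ⟨h, hl, hr⟩)
        · refine Or.inr (Or.inr ⟨?_, J.superset_covering (le_slr hid) h⟩)
          have := J.pullback_stable right h
          rwa [pullback_eq_bot hr] at this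
      · refine Or.inr (Or.inr ⟨?_, J.superset_covering (le_slr hid) h⟩)
        have := J.pullback_stable left h
        rwa [pullback_eq_bot hl] at this
    · rintro (rfl | ⟨hb, hl, hr⟩ | hab)
      · exact J.top_mem _
      · rw [eq_slr hid hl hr]; exact hb
      · exact J.superset_covering bot_le ((bot_one_iff J).mpr hab)

lemma classify : J = Jab (A J) (B J) := by
  ext X S
  cases X with
  | zero => exact (mem_zero_iff J S).trans (by rfl)
  | one => exact (mem_one_iff J S).trans (by rfl)

@[simp] lemma A_Jab (a b : Prop) : A (Jab a b) ↔ a := by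
  show ((⊥ : Sieve _) = ⊤ ∨ a) ↔ a
  simp [bot_ne_top]

@[simp] lemma B_Jab (a b : Prop) : B (Jab a b) ↔ b := by
  show (slr = ⊤ ∨ (b ∧ slr left ∧ slr right) ∨ (a ∧ b)) ↔ b
  simp [slr_ne_top, and_assoc]

lemma Jab_congr {a b a' b' : Prop} (ha : a ↔ a') (hb : b ↔ b') :
    Jab a b = Jab a' b' := by
  obtain rfl : a = a' := propext ha
  obtain rfl : b = b' := propext hb
  rfl

open Classical in
/-- The explicit equivalence. -/
noncomputable def equivFour : GrothendieckTopology WalkingParallelPair ≃ (Bool × Bool) where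
  toFun J := (decide (A J), decide (B J))
  invFun p := Jab (p.1 = true) (p.2 = true)
  left_inv J := by
    rw [classify J]
    refine (Jab_congr ?_ ?_).symm <;> simp
  right_inv p := by
    ext <;> simp

end FourTop

/-- On the category with two objects V, E and two parallel morphisms s, t : V → E
(the walking parallel pair, whose presheaves are directed graphs), there are exactly
4 Grothendieck topologies. -/
theorem four_grothendieck_topologies :
    Nat.card (GrothendieckTopology WalkingParallelPair) = 4 := by
  rw [Nat.card_congr FourTop.equivFour]
  simp
end
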